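/- Let y be a binary string of length n − δ. The number of binary strings of length n that contain y as a subsequence (i.e., supersequences of y of length n) is exactly Σ_{i=0}^{δ} C(n, i), independent of the particular string y. -/
import Mathlib

open Finset

lemma pascal_sum (n δ : ℕ) :
    ∑ i ∈ Finset.range (δ + 1), (n+1).choose i =
      ∑ i ∈ Finset.range (δ + 1), n.choose i + ∑ i ∈ Finset.range δ, n.choose i := by
  rw [Finset.sum_range_succ' (fun i => (n+1).choose i), Finset.sum_range_succ' (fun i => n.choose i)]
  simp only [Nat.choose_succ_succ, Finset.sum_add_distrib, Nat.choose_zero_right,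
    Nat.succ_eq_add_one]
  omega

lemma card_split (n : ℕ) (p : (Fin (n+1) → Bool) → Prop) [DecidablePred p] :
    ((Finset.univ : Finset (Fin (n+1) → Bool)).filter p).card =
      ((Finset.univ : Finset (Fin n → Bool)).filter (fun xs => p (Fin.cons true xs))).card +
      ((Finset.univ : Finset (Fin n → Bool)).filter (fun xs => p (Fin.cons false xs))).card := by
  simp only [Finset.card_filter]
  rw [← Fintype.sum_equiv (Fin.consEquiv (fun _ => Bool))
    (fun bx => if p (Fin.cons bx.1 bx.2) then 1 else 0)
    (fun x => if p x then 1 else 0) (fun x => rfl)]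
  rw [Fintype.sum_prod_type, Fintype.sum_bool]

/-- The number of binary strings of length `n` containing a fixed string `y` of
length `n − δ` as a subsequence is `∑_{i=0}^δ C(n, i)`, independently of `y`. -/
theorem stmt12 (n δ : ℕ) (hδ : δ ≤ n) (y : List Bool) (hy : y.length = n - δ) :
    ((Finset.univ : Finset (Fin n → Bool)).filter
        (fun x => y.Sublist (List.ofFn x))).card =
      ∑ i ∈ Finset.range (δ + 1), n.choose i := by
  induction n generalizing δ y with
  | zero =>
    have hδ0 : δ = 0 := Nat.le_zero.mp hδ
    subst hδ0
    have : y = [] := List.length_eq_zero_iff.mp (by simpa using hy)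
    subst this
    simp
  | succ n ih =>
    by_cases hδn : δ = n + 1
    · subst hδn
      have : y = [] := List.length_eq_zero_iff.mp (by simpa using hy)
      subst this
      simp only [List.nil_sublist, Finset.filter_true_of_mem (fun _ _ => trivial)]
      rw [Finset.card_univ, Fintype.card_fun]
      simp [Nat.sum_range_choose]
    · have hδ' : δ ≤ n := by omega
      have hylen : y.length = n + 1 - δ := hy
      obtain ⟨a, t, rfl⟩ : ∃ a t, y = a :: t := by
        cases y with
        | nil => exfalso; simp at hylen; omega
        | cons a t => exact ⟨a, t, rfl⟩
      have ht : t.length = n - δ := by simp at hylen; omega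
      have hofn : ∀ (b : Bool) (xs : Fin n → Bool),
          List.ofFn (Fin.cons b xs) = b :: List.ofFn xs := by
        intro b xs; simp [List.ofFn_succ]
      rw [card_split n (fun x => (a :: t).Sublist (List.ofFn x))]
      have key1 : ((Finset.univ : Finset (Fin n → Bool)).filter
          (fun xs => (a :: t).Sublist (List.ofFn (Fin.cons a xs)))).card =
          ∑ i ∈ Finset.range (δ + 1), n.choose i := by
        rw [Finset.filter_congr (q := fun xs => t.Sublist (List.ofFn xs)) (fun xs _ => by
          rw [hofn]; exact List.cons_sublist_cons)]
        exact ih δ hδ' t ht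
      have key2 : ((Finset.univ : Finset (Fin n → Bool)).filter
          (fun xs => (a :: t).Sublist (List.ofFn (Fin.cons (!a) xs)))).card =
          ∑ i ∈ Finset.range δ, n.choose i := by
        rw [Finset.filter_congr (q := fun xs => (a :: t).Sublist (List.ofFn xs))
          (fun xs _ => by
            rw [hofn]
            constructor
            · intro h
              rcases List.sublist_cons_iff.mp h with h | ⟨r, hr, hrs⟩
              · exact h
              · exfalso
                have : a = !a := by injection hr
                simp at this
            · intro h; exact h.cons _)]
        cases δ with
        | zero =>
          simp only [Finset.range_zero, Finset.sum_empty]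
          rw [Finset.card_eq_zero, Finset.filter_eq_empty_iff]
          intro xs _ h
          have hl := h.length_le
          simp at hl
          omega
        | succ δ' =>
          exact ih δ' (by omega) (a :: t) (by simp; omega)
      cases a with
      | true =>
        simp only [Bool.not_true] at key2
        rw [key1, key2, pascal_sum]
      | false =>
        simp only [Bool.not_false] at key2
        rw [key1, key2, pascal_sum]
        omega
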